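/- (Lemma 1, two hidden layers.) Let ‖·‖ be a norm on ℝⁿ with dual norm ‖·‖_*. Let A₁ be a p₁×n real matrix, b₁ ∈ ℝ^{p₁}, A₂ a p₂×p₁ real matrix, b₂ ∈ ℝ^{p₂}, c ∈ ℝ^{p₂}, and define F(x) = ⟨c, ReLU(A₂ · ReLU(A₁ x + b₁) + b₂)⟩ where ReLU is applied coordinatewise. Let Ω ⊆ ℝⁿ be convex and L ∈ ℝ be such that for every x ∈ Ω, setting z₁ = A₁ x + b₁ and z₂ = A₂ · ReLU(z₁) + b₂, for every u₁ ∈ ℝ^{p₁} with (u₁)ⱼ ∈ G((z₁)ⱼ) for all j and every u₂ ∈ ℝ^{p₂} with (u₂)ₖ ∈ G((z₂)ₖ) for all k, one has ‖A₁ᵀ diag(u₁) A₂ᵀ diag(u₂) c‖_* ≤ L. Then for all x, y ∈ Ω, |F(y) - F(x)| ≤ L · ‖y - x‖. -/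

import Mathlib

open Matrix Set NNReal

/-- The ReLU function. -/
noncomputable def ReLU (x : ℝ) : ℝ := max 0 x

/-- The generalized derivative of ReLU: `G(x) = {1}` for `x > 0`, `{0}` for `x < 0`,
and `{0, 1}` for `x = 0`. -/
noncomputable def G (x : ℝ) : Set ℝ :=
  if 0 < x then {1} else if x < 0 then {0} else {0, 1}

/-- The dual norm of a norm `N` on `ℝⁿ`:
`‖v‖_* = sup { |⟨t, v⟩| : N t ≤ 1 }`. -/
noncomputable def dualNorm (n : ℕ) (N : (Fin n → ℝ) → ℝ) (v : Fin n → ℝ) : ℝ :=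
  sSup {r : ℝ | ∃ t : Fin n → ℝ, N t ≤ 1 ∧ r = |∑ i, t i * v i|}

lemma relu_continuous : Continuous ReLU := continuous_const.max continuous_id

lemma deriv_of_bound {h f : ℝ → ℝ} {d e t : ℝ} (hh : HasDerivWithinAt h d (Ici t) t)
    (hb : ∀ᶠ s in nhdsWithin t (Ici t),
      |f s - f t - (s - t) * e| ≤ |h s - h t - (s - t) * d|) :
    HasDerivWithinAt f e (Ici t) t := by
  rw [hasDerivWithinAt_iff_isLittleO] at hh ⊢
  simp only [smul_eq_mul] at hh ⊢
  refine Asymptotics.IsBigO.trans_isLittleO ?_ hh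
  refine Asymptotics.IsBigO.of_bound 1 ?_
  filter_upwards [hb] with s hs
  simpa [Real.norm_eq_abs] using hs

lemma relu_step {h : ℝ → ℝ} {d t : ℝ} (hh : HasDerivWithinAt h d (Ici t) t) :
    ∃ u, u ∈ G (h t) ∧ HasDerivWithinAt (fun s => ReLU (h s)) (u * d) (Ici t) t := by
  rcases lt_trichotomy 0 (h t) with hpos | hzero | hneg
  · refine ⟨1, by simp [G, hpos], deriv_of_bound hh ?_⟩
    filter_upwards [hh.continuousWithinAt <| Ioi_mem_nhds hpos] with s hs
    rw [ReLU, ReLU, max_eq_right (le_of_lt hs), max_eq_right hpos.le, one_mul]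
  · have h0 : h t = 0 := hzero.symm
    rcases le_or_gt 0 d with hd | hd
    · refine ⟨1, by simp [G, h0], deriv_of_bound hh ?_⟩
      filter_upwards [self_mem_nhdsWithin] with s (hs : t ≤ s)
      have hδ : 0 ≤ (s - t) * d := mul_nonneg (by linarith) hd
      rw [h0, ReLU, ReLU, max_self, one_mul, sub_zero, sub_zero]
      rcases le_or_gt 0 (h s) with h1 | h1
      · rw [max_eq_right h1]
      · rw [max_eq_left h1.le]
        rw [abs_of_nonpos (by linarith), abs_of_nonpos (by linarith)]
        linarith
    · refine ⟨0, by simp [G, h0], deriv_of_bound hh ?_⟩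
      filter_upwards [self_mem_nhdsWithin] with s (hs : t ≤ s)
      have hδ : (s - t) * d ≤ 0 := mul_nonpos_of_nonneg_of_nonpos (by linarith) hd.le
      rw [h0, ReLU, ReLU, max_self, zero_mul, mul_zero, sub_zero, sub_zero, sub_zero]
      rcases le_or_gt (h s) 0 with h1 | h1
      · rw [max_eq_left h1]
        simpa using abs_nonneg _
      · rw [max_eq_right h1.le, abs_of_nonneg h1.le, abs_of_nonneg (by linarith)]
        linarith
  · refine ⟨0, by simp [G, hneg, asymm hneg], deriv_of_bound hh ?_⟩
    filter_upwards [hh.continuousWithinAt <| Iio_mem_nhds hneg] with s hs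
    rw [ReLU, ReLU, max_eq_left (le_of_lt hs), max_eq_left hneg.le, zero_mul, mul_zero,
      sub_zero, sub_self, abs_zero]
    exact abs_nonneg _


section NormFacts
variable {n : ℕ} {N : (Fin n → ℝ) → ℝ}
  (Nadd : ∀ a b : Fin n → ℝ, N (a + b) ≤ N a + N b)
  (Nsmul : ∀ (r : ℝ) (a : Fin n → ℝ), N (r • a) = |r| * N a)
  (Ndef : ∀ a : Fin n → ℝ, N a = 0 → a = 0)

include Nsmul in
lemma Nzero : N 0 = 0 := by
  have := Nsmul 0 0; simpa using this

include Nadd Nsmul in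
lemma Nnonneg : ∀ a, 0 ≤ N a := by
  intro a
  have h1 : N (a + (-1 : ℝ) • a) ≤ N a + N ((-1 : ℝ) • a) := Nadd _ _
  rw [Nsmul] at h1
  simp at h1
  rw [Nzero Nsmul] at h1
  linarith

include Nadd Nsmul in
lemma Nsum {ι : Type*} (s : Finset ι) (f : ι → Fin n → ℝ) :
    N (∑ i ∈ s, f i) ≤ ∑ i ∈ s, N (f i) := by
  classical
  induction s using Finset.induction with
  | empty => simp [Nzero Nsmul]
  | insert _ _ h ih =>
      rw [Finset.sum_insert h, Finset.sum_insert h]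
      exact (Nadd _ _).trans (by linarith)

include Nadd Nsmul in
lemma Ncont : Continuous N := by
  set K : ℝ≥0 := ∑ i : Fin n, ‖N (Pi.single i 1)‖₊ with hK
  refine (LipschitzWith.of_dist_le_mul (K := K) ?_).continuous
  intro a b
  have key : ∀ u v : Fin n → ℝ, N u - N v ≤ (K : ℝ) * dist u v := by
    intro u v
    have h1 : N u ≤ N v + N (u - v) := by
      have := Nadd v (u - v); simpa using this
    have h2 : N (u - v) ≤ (K : ℝ) * dist u v := by
      have hrepr : u - v = ∑ i : Fin n, ((u - v) i) • (Pi.single i 1 : Fin n → ℝ) := by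
        funext j
        simp [Finset.sum_apply, Pi.single_apply]
      have hstep : N (u - v) ≤ ∑ i : Fin n, N (((u - v) i) • (Pi.single i 1 : Fin n → ℝ)) := by
        conv_lhs => rw [hrepr]
        exact Nsum Nadd Nsmul _ _
      calc N (u - v) ≤ ∑ i : Fin n, N (((u - v) i) • (Pi.single i 1 : Fin n → ℝ)) := hstep
        _ = ∑ i : Fin n, |(u - v) i| * N (Pi.single i 1) := by simp [Nsmul]
        _ ≤ ∑ i : Fin n, dist u v * N (Pi.single i 1) := by
              refine Finset.sum_le_sum fun i _ => ?_
              refine mul_le_mul_of_nonneg_right ?_ (Nnonneg Nadd Nsmul _)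
              rw [← Real.norm_eq_abs]
              calc ‖(u - v) i‖ ≤ ‖u - v‖ := norm_le_pi_norm _ i
                _ = dist u v := (dist_eq_norm u v).symm
        _ = (∑ i : Fin n, N (Pi.single i 1)) * dist u v := by rw [Finset.sum_mul]; exact Finset.sum_congr rfl fun i _ => mul_comm _ _
        _ = (K : ℝ) * dist u v := by
              congr 1
              rw [hK]
              push_cast
              refine Finset.sum_congr rfl fun i _ => ?_
              rw [Real.norm_eq_abs, abs_of_nonneg (Nnonneg Nadd Nsmul _)]
    linarith
  rw [Real.dist_eq, abs_sub_le_iff]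
  constructor
  · linarith [key a b]
  · rw [dist_comm]; linarith [key b a]

include Nadd Nsmul Ndef in
lemma Nlower (hn : ∃ w : Fin n → ℝ, w ≠ 0) :
    ∃ m > 0, ∀ t : Fin n → ℝ, m * ‖t‖ ≤ N t := by
  obtain ⟨w, hw⟩ := hn
  have hsph : (Metric.sphere (0 : Fin n → ℝ) 1).Nonempty := by
    refine ⟨‖w‖⁻¹ • w, ?_⟩
    simp [norm_smul, norm_ne_zero_iff.2 hw, abs_of_nonneg (inv_nonneg.2 (norm_nonneg w)),
      inv_mul_cancel₀ (norm_ne_zero_iff.2 hw)]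
  obtain ⟨t₀, ht₀, hmin⟩ := (isCompact_sphere (0 : Fin n → ℝ) 1).exists_isMinOn hsph
    ((Ncont Nadd Nsmul).continuousOn)
  have ht₀norm : ‖t₀‖ = 1 := by simpa using ht₀
  have hm : 0 < N t₀ := by
    rcases (Nnonneg Nadd Nsmul t₀).lt_or_eq with h | h
    · exact h
    · exfalso
      have := Ndef t₀ h.symm
      rw [this] at ht₀norm; simp at ht₀norm
  refine ⟨N t₀, hm, fun t => ?_⟩
  rcases eq_or_ne t 0 with rfl | ht
  · simp [Nzero Nsmul]
  · have hnt : ‖t‖ ≠ 0 := norm_ne_zero_iff.2 ht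
    have hmem : ‖t‖⁻¹ • t ∈ Metric.sphere (0 : Fin n → ℝ) 1 := by
      simp [norm_smul, abs_of_nonneg (inv_nonneg.2 (norm_nonneg t)), inv_mul_cancel₀ hnt]
    have h1 : N t₀ ≤ N (‖t‖⁻¹ • t) := hmin hmem
    rw [Nsmul, abs_of_nonneg (inv_nonneg.2 (norm_nonneg t))] at h1
    have hpos : (0:ℝ) < ‖t‖ := lt_of_le_of_ne (norm_nonneg t) (Ne.symm hnt)
    calc N t₀ * ‖t‖ ≤ (‖t‖⁻¹ * N t) * ‖t‖ := by nlinarith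
      _ = N t := by field_simp

include Nadd Nsmul Ndef in
lemma dual_pairing_le {v w : Fin n → ℝ} (hw : w ≠ 0) :
    |∑ i, w i * v i| ≤ dualNorm n N v * N w := by
  have hNw : 0 < N w := by
    rcases (Nnonneg Nadd Nsmul w).lt_or_eq with h | h
    · exact h
    · exact absurd (Ndef w h.symm) hw
  obtain ⟨m, hm, hlow⟩ := Nlower Nadd Nsmul Ndef ⟨w, hw⟩
  have hbdd : BddAbove {r : ℝ | ∃ t : Fin n → ℝ, N t ≤ 1 ∧ r = |∑ i, t i * v i|} := by
    refine ⟨(1/m) * ∑ i, |v i|, fun r hr => ?_⟩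
    obtain ⟨t, hts, rfl⟩ := hr
    have htn : ‖t‖ ≤ 1/m := by
      have := hlow t
      rw [div_eq_inv_mul, le_inv_mul_iff₀ hm]
      linarith
    calc |∑ i, t i * v i| ≤ ∑ i, |t i * v i| := Finset.abs_sum_le_sum_abs _ _
      _ ≤ ∑ i, (1/m) * |v i| := by
          refine Finset.sum_le_sum fun i _ => ?_
          rw [abs_mul]
          refine mul_le_mul_of_nonneg_right ?_ (abs_nonneg _)
          calc |t i| = ‖t i‖ := rfl
            _ ≤ ‖t‖ := norm_le_pi_norm t i
            _ ≤ 1/m := htn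
      _ = (1/m) * ∑ i, |v i| := by rw [Finset.mul_sum]
  have hmem : (N w)⁻¹ * |∑ i, w i * v i| ∈
      {r : ℝ | ∃ t : Fin n → ℝ, N t ≤ 1 ∧ r = |∑ i, t i * v i|} := by
    refine ⟨(N w)⁻¹ • w, ?_, ?_⟩
    · rw [Nsmul, abs_of_nonneg (inv_nonneg.2 hNw.le), inv_mul_cancel₀ hNw.ne']
    · rw [show ∑ i, ((N w)⁻¹ • w) i * v i = (N w)⁻¹ * ∑ i, w i * v i by
        rw [Finset.mul_sum]; exact Finset.sum_congr rfl fun i _ => by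
          simp [Pi.smul_apply, smul_eq_mul, mul_assoc]]
      rw [abs_mul, abs_of_nonneg (inv_nonneg.2 hNw.le)]
  have := le_csSup hbdd hmem
  rw [dualNorm]
  calc |∑ i, w i * v i| = N w * ((N w)⁻¹ * |∑ i, w i * v i|) := by field_simp
    _ ≤ N w * sSup _ := mul_le_mul_of_nonneg_left this hNw.le
    _ = _ * N w := mul_comm _ _
end NormFacts


/-- Lemma 1, two hidden layers: if `‖A₁ᵀ diag(u₁) A₂ᵀ diag(u₂) c‖_* ≤ L` for every
`x ∈ Ω` and every admissible pair `(u₁, u₂)` of generalized derivatives at the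
pre-activations `z₁ = A₁x + b₁` and `z₂ = A₂ ReLU(z₁) + b₂`, then `L` is a
Lipschitz constant on the convex set `Ω` for
`F(x) = ⟨c, ReLU(A₂ ReLU(A₁x + b₁) + b₂)⟩` w.r.t. the norm `N`. -/
theorem two_layer_lipschitz_bound (n p₁ p₂ : ℕ)
    (N : (Fin n → ℝ) → ℝ)
    (Nadd : ∀ a b : Fin n → ℝ, N (a + b) ≤ N a + N b)
    (Nsmul : ∀ (r : ℝ) (a : Fin n → ℝ), N (r • a) = |r| * N a)
    (Ndef : ∀ a : Fin n → ℝ, N a = 0 → a = 0)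
    (A₁ : Matrix (Fin p₁) (Fin n) ℝ) (b₁ : Fin p₁ → ℝ)
    (A₂ : Matrix (Fin p₂) (Fin p₁) ℝ) (b₂ c : Fin p₂ → ℝ)
    (F : (Fin n → ℝ) → ℝ)
    (hF : ∀ x, F x = ∑ k, c k *
      ReLU ((A₂.mulVec (fun j => ReLU ((A₁.mulVec x + b₁) j)) + b₂) k))
    (Ω : Set (Fin n → ℝ)) (hΩ : Convex ℝ Ω) (L : ℝ)
    (hL : ∀ x ∈ Ω, ∀ u₁ : Fin p₁ → ℝ, ∀ u₂ : Fin p₂ → ℝ,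
      (∀ j, u₁ j ∈ G ((A₁.mulVec x + b₁) j)) →
      (∀ k, u₂ k ∈ G ((A₂.mulVec (fun j => ReLU ((A₁.mulVec x + b₁) j)) + b₂) k)) →
      dualNorm n N
        ((A₁ᵀ * Matrix.diagonal u₁ * A₂ᵀ * Matrix.diagonal u₂).mulVec c) ≤ L) :
    ∀ x ∈ Ω, ∀ y ∈ Ω, |F y - F x| ≤ L * N (y - x) := by
  classical
  intro x hx y hy
  set w : Fin n → ℝ := y - x with hw
  rcases eq_or_ne w 0 with hw0 | hw0
  · have hyx : y = x := by
      have := sub_eq_zero.mp hw0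
      exact this
    rw [hyx, sub_self, abs_zero, hw0, Nzero Nsmul, mul_zero]
  · -- main case
    set g : ℝ → ℝ := fun s => F (x + s • w) with hg
    set d : Fin p₁ → ℝ := A₁.mulVec w with hd
    have hz : ∀ (j : Fin p₁) (s : ℝ),
        (A₁.mulVec (x + s • w) + b₁) j = (A₁.mulVec x + b₁) j + s * d j := by
      intro j s
      simp [Matrix.mulVec_add, Matrix.mulVec_smul, hd]
      ring
    have hgc : Continuous g := by
      have hgeq : g = fun s => ∑ k, c k *
          ReLU ((A₂.mulVec (fun j => ReLU ((A₁.mulVec (x + s • w) + b₁) j)) + b₂) k) :=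
        funext fun s => hF _
      rw [hgeq]
      refine continuous_finset_sum _ fun k _ => continuous_const.mul (relu_continuous.comp ?_)
      simp only [Pi.add_apply, Matrix.mulVec, dotProduct]
      refine Continuous.add (continuous_finset_sum _ fun j _ =>
        continuous_const.mul (relu_continuous.comp ?_)) continuous_const
      simp only [Pi.smul_apply, smul_eq_mul]
      fun_prop
    have key : ∀ t ∈ Ico (0:ℝ) 1, ∃ g', HasDerivWithinAt g g' (Ici t) t ∧ |g'| ≤ L * N w := by
      intro t ht
      -- layer 1 derivatives
      have hd1 : ∀ j : Fin p₁, HasDerivWithinAt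
          (fun s => (A₁.mulVec (x + s • w) + b₁) j) (d j) (Ici t) t := by
        intro j
        have heq : (fun s => (A₁.mulVec (x + s • w) + b₁) j)
            = fun s => (A₁.mulVec x + b₁) j + s * d j := funext fun s => hz j s
        rw [heq]
        simpa using (((hasDerivAt_id t).mul_const (d j)).const_add
          ((A₁.mulVec x + b₁) j)).hasDerivWithinAt
      have h1 : ∀ j : Fin p₁, ∃ u, u ∈ G ((A₁.mulVec (x + t • w) + b₁) j) ∧
          HasDerivWithinAt (fun s => ReLU ((A₁.mulVec (x + s • w) + b₁) j))
            (u * d j) (Ici t) t := fun j => relu_step (hd1 j)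
      choose u₁ hu₁G hu₁d using h1
      set e : Fin p₂ → ℝ := fun k => ∑ j, A₂ k j * (u₁ j * d j) with he
      have hd2 : ∀ k : Fin p₂, HasDerivWithinAt
          (fun s => (A₂.mulVec (fun j => ReLU ((A₁.mulVec (x + s • w) + b₁) j)) + b₂) k)
          (e k) (Ici t) t := by
        intro k
        have heq : (fun s : ℝ => (A₂.mulVec (fun j => ReLU ((A₁.mulVec (x + s • w) + b₁) j)) + b₂) k)
            = fun s : ℝ => (∑ j, A₂ k j * ReLU ((A₁.mulVec (x + s • w) + b₁) j)) + b₂ k := by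
          funext s
          simp [Matrix.mulVec, dotProduct]
        rw [heq]
        exact (HasDerivWithinAt.fun_sum fun j _ => (hu₁d j).const_mul (A₂ k j)).add_const _
      have h2 : ∀ k : Fin p₂, ∃ u, u ∈ G
          ((A₂.mulVec (fun j => ReLU ((A₁.mulVec (x + t • w) + b₁) j)) + b₂) k) ∧
          HasDerivWithinAt
            (fun s => ReLU ((A₂.mulVec (fun j => ReLU ((A₁.mulVec (x + s • w) + b₁) j)) + b₂) k))
            (u * e k) (Ici t) t := fun k => relu_step (hd2 k)
      choose u₂ hu₂G hu₂d using h2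
      have hgd : HasDerivWithinAt g (∑ k, c k * (u₂ k * e k)) (Ici t) t := by
        have hgeq : g = fun s => ∑ k, c k *
            ReLU ((A₂.mulVec (fun j => ReLU ((A₁.mulVec (x + s • w) + b₁) j)) + b₂) k) :=
          funext fun s => hF _
        rw [hgeq]
        exact HasDerivWithinAt.fun_sum fun k _ => (hu₂d k).const_mul (c k)
      set v : Fin n → ℝ := (A₁ᵀ * Matrix.diagonal u₁ * A₂ᵀ * Matrix.diagonal u₂).mulVec c with hv
      have halg : ∑ k, c k * (u₂ k * e k) = ∑ i, w i * v i := by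
        have hvrepr : v = A₁ᵀ.mulVec ((Matrix.diagonal u₁).mulVec
            (A₂ᵀ.mulVec ((Matrix.diagonal u₂).mulVec c))) := by
          rw [hv, Matrix.mulVec_mulVec, Matrix.mulVec_mulVec, Matrix.mulVec_mulVec]
        set T : Fin p₂ → Fin p₁ → Fin n → ℝ :=
          fun k j i => c k * u₂ k * A₂ k j * u₁ j * A₁ j i * w i with hT
        have hLHS : ∑ k, c k * (u₂ k * e k) = ∑ k, ∑ j, ∑ i, T k j i := by
          refine Finset.sum_congr rfl fun k _ => ?_
          rw [he]
          simp only [hd, Matrix.mulVec, dotProduct, Finset.mul_sum]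
          refine Finset.sum_congr rfl fun j _ => ?_
          refine Finset.sum_congr rfl fun i _ => ?_
          rw [hT]; ring
        have hvi : ∀ i, v i = ∑ j, A₁ j i * (u₁ j * ∑ k, A₂ k j * (u₂ k * c k)) := by
          intro i
          rw [hvrepr]
          rw [show ((Matrix.diagonal u₂).mulVec c) = (fun k => u₂ k * c k) from
            funext fun k => Matrix.mulVec_diagonal _ _ _]
          rw [show ((Matrix.diagonal u₁).mulVec (A₂ᵀ.mulVec fun k => u₂ k * c k))
              = (fun j => u₁ j * (A₂ᵀ.mulVec fun k => u₂ k * c k) j) from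
            funext fun j => Matrix.mulVec_diagonal _ _ _]
          simp [Matrix.mulVec, dotProduct, Matrix.transpose_apply]
        have hRHS : ∑ i, w i * v i = ∑ i, ∑ j, ∑ k, T k j i := by
          refine Finset.sum_congr rfl fun i _ => ?_
          rw [hvi i]
          simp only [Finset.mul_sum]
          refine Finset.sum_congr rfl fun j _ => ?_
          refine Finset.sum_congr rfl fun k _ => ?_
          rw [hT]; ring
        rw [hLHS, hRHS]
        rw [show (∑ i, ∑ j, ∑ k, T k j i) = ∑ j, ∑ i, ∑ k, T k j i from Finset.sum_comm]
        rw [show (∑ k, ∑ j, ∑ i, T k j i) = ∑ j, ∑ k, ∑ i, T k j i from Finset.sum_comm]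
        exact Finset.sum_congr rfl fun j _ => Finset.sum_comm
      have hmem : x + t • w ∈ Ω := by
        have hcvx := hΩ hx hy (by linarith [ht.1, ht.2] : (0:ℝ) ≤ 1 - t) ht.1 (by ring)
        have : (1 - t) • x + t • y = x + t • w := by
          rw [hw]; rw [sub_smul, smul_sub, one_smul]; abel
        rwa [this] at hcvx
      have hdual : dualNorm n N v ≤ L := hL (x + t • w) hmem u₁ u₂ hu₁G hu₂G
      refine ⟨∑ k, c k * (u₂ k * e k), hgd, ?_⟩
      rw [halg]
      calc |∑ i, w i * v i| ≤ dualNorm n N v * N w := dual_pairing_le Nadd Nsmul Ndef hw0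
        _ ≤ L * N w := mul_le_mul_of_nonneg_right hdual (Nnonneg Nadd Nsmul w)
    -- glue
    set D : ℝ → ℝ := fun t => if h : ∃ g', HasDerivWithinAt g g' (Ici t) t ∧ |g'| ≤ L * N w
      then h.choose else 0 with hD
    have hf' : ∀ t ∈ Ico (0:ℝ) 1, HasDerivWithinAt g (D t) (Ici t) t := by
      intro t ht
      rw [hD]
      simp only [dif_pos (key t ht)]
      exact (key t ht).choose_spec.1
    have hbound : ∀ t ∈ Ico (0:ℝ) 1, ‖D t‖ ≤ L * N w := by
      intro t ht
      rw [hD]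
      simp only [dif_pos (key t ht)]
      exact (key t ht).choose_spec.2
    have := norm_image_sub_le_of_norm_deriv_right_le_segment
      (f := g) (a := 0) (b := 1) hgc.continuousOn hf' hbound 1 (right_mem_Icc.2 zero_le_one)
    have hg1 : g 1 = F y := by rw [hg]; simp [hw]
    have hg0 : g 0 = F x := by rw [hg]; simp
    rw [hg1, hg0, Real.norm_eq_abs] at this
    simpa using this
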